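/- In the linear structural model, the minimizer of the empirical cross-fold risk over linear functions $h(s) = s\beta$ equals the $L$-fold JIVE: $\hat\beta = (\sum_{a=1}^K\sum_{v=1}^L \bar S_{a,-v}^\top \bar S_{a,v})^{-1} \sum_{a=1}^K\sum_{v=1}^L \bar S_{a,-v}^\top \bar Y_{a,v}$, provided the matrix $\sum_{a,v}\bar S_{a,-v}^\top \bar S_{a,v}$ is symmetric positive definite. -/

import Mathlib

open Finset Matrix

/-- Empirical cross-fold risk restricted to linear bridge functions h(s)=sβ,
expressed via cell-fold aggregates. -/
noncomputable def linEmpRisk {K L d : ℕ}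
    (Sout : Fin K → Fin L → Fin d → ℝ)  -- leave-fold-out means S̄_{a,-v}
    (Sbar : Fin K → Fin L → Fin d → ℝ)  -- fold means S̄_{a,v}
    (Ybar : Fin K → Fin L → ℝ)          -- fold means Ȳ_{a,v}
    (β : Fin d → ℝ) : ℝ :=
  - (1 / ((K : ℝ) * L)) * ∑ a, ∑ v, (∑ p, Sout a v p * β p) * Ybar a v
  + (1 / (2 * (K : ℝ) * L)) * ∑ a, ∑ v,
      (∑ p, Sout a v p * β p) * (∑ p, Sbar a v p * β p)

lemma swap3 {K L d : ℕ} (f : Fin K → Fin L → Fin d → ℝ) :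
    ∑ a, ∑ v, ∑ p, f a v p = ∑ p, ∑ a, ∑ v, f a v p :=
  calc ∑ a, ∑ v, ∑ p, f a v p
      = ∑ a, ∑ p, ∑ v, f a v p :=
        Finset.sum_congr rfl fun a _ => Finset.sum_comm
    _ = ∑ p, ∑ a, ∑ v, f a v p := Finset.sum_comm

lemma swap4 {K L d : ℕ} (f : Fin K → Fin L → Fin d → Fin d → ℝ) :
    ∑ a, ∑ v, ∑ p, ∑ q, f a v p q = ∑ p, ∑ q, ∑ a, ∑ v, f a v p q :=
  calc ∑ a, ∑ v, ∑ p, ∑ q, f a v p q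
      = ∑ a, ∑ p, ∑ v, ∑ q, f a v p q :=
        Finset.sum_congr rfl fun a _ => Finset.sum_comm
    _ = ∑ p, ∑ a, ∑ v, ∑ q, f a v p q := Finset.sum_comm
    _ = ∑ p, ∑ a, ∑ q, ∑ v, f a v p q :=
        Finset.sum_congr rfl fun p _ => Finset.sum_congr rfl fun a _ => Finset.sum_comm
    _ = ∑ p, ∑ q, ∑ a, ∑ v, f a v p q :=
        Finset.sum_congr rfl fun p _ => Finset.sum_comm

lemma risk_eq {K L d : ℕ}
    (Sout Sbar : Fin K → Fin L → Fin d → ℝ) (Ybar : Fin K → Fin L → ℝ)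
    (M : Matrix (Fin d) (Fin d) ℝ)
    (hM : M = fun p q => ∑ a, ∑ v, Sout a v p * Sbar a v q)
    (b : Fin d → ℝ)
    (hb : b = fun p => ∑ a, ∑ v, Sout a v p * Ybar a v)
    (β : Fin d → ℝ) :
    linEmpRisk Sout Sbar Ybar β
      = - (1 / ((K : ℝ) * L)) * (b ⬝ᵥ β)
        + (1 / (2 * (K : ℝ) * L)) * (β ⬝ᵥ M.mulVec β) := by
  subst hM hb
  unfold linEmpRisk
  congr 2
  · simp only [dotProduct, Finset.sum_mul, Finset.mul_sum]
    rw [swap3 (f := fun a v p => Sout a v p * β p * Ybar a v)]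
    refine Finset.sum_congr rfl fun p _ => Finset.sum_congr rfl fun a _ =>
      Finset.sum_congr rfl fun v _ => by ring
  · simp only [dotProduct, mulVec, Finset.sum_mul, Finset.mul_sum]
    rw [swap4 (f := fun a v p q => Sout a v q * β q * (Sbar a v p * β p))]
    rw [Finset.sum_comm]
    refine Finset.sum_congr rfl fun q _ => Finset.sum_congr rfl fun p _ =>
      Finset.sum_congr rfl fun a _ => Finset.sum_congr rfl fun v _ => by ring

/-- the minimizer of the empirical cross-fold risk over linear
functions is the L-fold JIVE
β̂ = (∑_{a,v} S̄_{a,-v}ᵀ S̄_{a,v})⁻¹ ∑_{a,v} S̄_{a,-v}ᵀ Ȳ_{a,v},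
provided ∑_{a,v} S̄_{a,-v}ᵀ S̄_{a,v} is symmetric positive definite. -/
theorem stmt10 {K L d : ℕ} (hK : 0 < K) (hL : 0 < L)
    (Sout Sbar : Fin K → Fin L → Fin d → ℝ) (Ybar : Fin K → Fin L → ℝ)
    (M : Matrix (Fin d) (Fin d) ℝ)
    (hM : M = fun p q => ∑ a, ∑ v, Sout a v p * Sbar a v q)
    (b : Fin d → ℝ)
    (hb : b = fun p => ∑ a, ∑ v, Sout a v p * Ybar a v)
    (hMpd : M.PosDef) :
    (∀ β : Fin d → ℝ,
      linEmpRisk Sout Sbar Ybar (M⁻¹.mulVec b) ≤ linEmpRisk Sout Sbar Ybar β)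
    ∧ (∀ β : Fin d → ℝ,
        (∀ β' : Fin d → ℝ,
          linEmpRisk Sout Sbar Ybar β ≤ linEmpRisk Sout Sbar Ybar β') →
        β = M⁻¹.mulVec b) := by
  have hdet : IsUnit M.det := isUnit_iff_ne_zero.mpr hMpd.det_pos.ne'
  set βs : Fin d → ℝ := M⁻¹.mulVec b with hβs
  have hMβs : M.mulVec βs = b := by
    rw [hβs, Matrix.mulVec_mulVec, Matrix.mul_nonsing_inv M hdet, Matrix.one_mulVec]
  have hT : Mᵀ = M := by
    ext p q
    have := congrFun (congrFun hMpd.isHermitian.eq p) q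
    simpa [Matrix.conjTranspose_apply] using this
  have hsym : ∀ x y : Fin d → ℝ, x ⬝ᵥ M.mulVec y = y ⬝ᵥ M.mulVec x := by
    intro x y
    rw [Matrix.dotProduct_mulVec, ← Matrix.mulVec_transpose, hT, dotProduct_comm]
  have hKL : 0 < (K : ℝ) * L := by positivity
  have key : ∀ β : Fin d → ℝ,
      linEmpRisk Sout Sbar Ybar β = linEmpRisk Sout Sbar Ybar βs
        + (1 / (2 * (K : ℝ) * L)) * ((β - βs) ⬝ᵥ M.mulVec (β - βs)) := by
    intro β
    rw [risk_eq Sout Sbar Ybar M hM b hb β, risk_eq Sout Sbar Ybar M hM b hb βs]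
    have hexp : β = βs + (β - βs) := by ring
    set δ : Fin d → ℝ := β - βs with hδ
    have h1 : β ⬝ᵥ M.mulVec β
        = βs ⬝ᵥ M.mulVec βs + 2 * (δ ⬝ᵥ M.mulVec βs) + δ ⬝ᵥ M.mulVec δ := by
      rw [hexp]
      simp only [Matrix.mulVec_add, dotProduct_add, add_dotProduct]
      rw [hsym βs δ]
      ring
    have h2 : b ⬝ᵥ β = b ⬝ᵥ βs + δ ⬝ᵥ M.mulVec βs := by
      rw [hexp, dotProduct_add, hMβs, dotProduct_comm b δ]
    rw [h1, h2]
    have hKL' : (K : ℝ) * L ≠ 0 := ne_of_gt hKL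
    field_simp
    ring
  have hquad : ∀ δ : Fin d → ℝ, 0 ≤ δ ⬝ᵥ M.mulVec δ := by
    intro δ
    have := hMpd.posSemidef.dotProduct_mulVec_nonneg δ
    simpa using this
  constructor
  · intro β
    rw [key β]
    have : 0 ≤ (1 / (2 * (K : ℝ) * L)) * ((β - βs) ⬝ᵥ M.mulVec (β - βs)) := by
      apply mul_nonneg (by positivity) (hquad _)
    linarith
  · intro β hmin
    by_contra hne
    have hδne : β - βs ≠ 0 := sub_ne_zero.mpr hne
    have hpos : 0 < (β - βs) ⬝ᵥ M.mulVec (β - βs) := by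
      have := hMpd.dotProduct_mulVec_pos hδne
      simpa using this
    have h1 := hmin βs
    rw [key β] at h1
    have : 0 < (1 / (2 * (K : ℝ) * L)) * ((β - βs) ⬝ᵥ M.mulVec (β - βs)) := by
      apply mul_pos (by positivity) hpos
    linarith
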